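/- Let k be a field of characteristic zero, N > 1 a natural number, and q ∈ k a primitive N-th root of unity. For natural numbers a, i, j with 0 ≤ a, i, j < N and i + j = N + a, one has ∑_{k=0}^{a} q^{k(k−j)} · binom(j,k)_q · binom(i,a−k)_q = 1. -/

import Mathlib

/-- The q-integer `(n)_q = 1 + q + ⋯ + q^{n-1}`. -/
def qNat {k : Type*} [Field k] (q : k) (n : ℕ) : k :=
  ∑ i ∈ Finset.range n, q ^ i

/-- The q-factorial `(n)!_q = (1)_q (2)_q ⋯ (n)_q`, with `(0)!_q = 1`. -/
def qFact {k : Type*} [Field k] (q : k) (n : ℕ) : k :=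
  ∏ i ∈ Finset.range n, qNat q (i + 1)

/-- The Gaussian binomial coefficient `binom(n,m)_q = (n)!_q / ((n-m)!_q (m)!_q)`. -/
def qBinom {k : Type*} [Field k] (q : k) (n m : ℕ) : k :=
  qFact q n / (qFact q (n - m) * qFact q m)

namespace QAux
variable {k : Type*} [Field k]

/-- The Gaussian binomial, defined via the q-Pascal recurrence. -/
def gb (q : k) : ℕ → ℕ → k
  | _, 0 => 1
  | 0, _ + 1 => 0
  | n + 1, m + 1 => gb q n m + q ^ (m + 1) * gb q n (m + 1)

@[simp] lemma gb_zero (q : k) (n : ℕ) : gb q n 0 = 1 := by cases n <;> rfl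

@[simp] lemma gb_zero_succ (q : k) (m : ℕ) : gb q 0 (m + 1) = 0 := rfl

lemma gb_succ_succ (q : k) (n m : ℕ) :
    gb q (n + 1) (m + 1) = gb q n m + q ^ (m + 1) * gb q n (m + 1) := rfl

lemma gb_of_lt (q : k) : ∀ n m, n < m → gb q n m = 0 := by
  intro n
  induction n with
  | zero => intro m hm; cases m with
    | zero => omega
    | succ t => rfl
  | succ n ih =>
    intro m hm
    cases m with
    | zero => omega
    | succ t =>
      rw [gb_succ_succ, ih t (by omega), ih (t + 1) (by omega)]
      ring

@[simp] lemma gb_self (q : k) : ∀ n, gb q n n = 1 := by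
  intro n
  induction n with
  | zero => rfl
  | succ n ih => rw [gb_succ_succ, ih, gb_of_lt q n (n + 1) (by omega)]; ring

lemma gb_cross (q : k) : ∀ n m, (q ^ n - q ^ m) * gb q n m
    = q ^ m * (q ^ (m + 1) - 1) * gb q n (m + 1) := by
  intro n
  induction n with
  | zero =>
    intro m
    cases m with
    | zero => simp [gb]
    | succ t => simp [gb]
  | succ n ih =>
    intro m
    cases m with
    | zero =>
      have h := ih 0
      simp only [gb_zero, pow_zero, gb_succ_succ] at *
      linear_combination q * h
    | succ t =>
      rw [gb_succ_succ, gb_succ_succ]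
      linear_combination q * ih t + q ^ (t + 2) * ih (t + 1)

lemma pascalB (q : k) (n m : ℕ) :
    q ^ (m + 1) * gb q (n + 1) (m + 1)
      = q ^ (n + 1) * gb q n m + q ^ (m + 1) * gb q n (m + 1) := by
  rw [gb_succ_succ]
  linear_combination (-q) * gb_cross q n m

lemma qNat_succ (q : k) (n : ℕ) : qNat q (n + 1) = qNat q n + q ^ n := by
  simp [qNat, Finset.sum_range_succ]

lemma qNat_add (q : k) (a : ℕ) : ∀ b, qNat q (a + b) = qNat q a + q ^ a * qNat q b := by
  intro b
  induction b with
  | zero => simp [qNat]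
  | succ b ih =>
    rw [← Nat.add_assoc, qNat_succ, ih, qNat_succ, pow_add]
    ring

@[simp] lemma qFact_zero (q : k) : qFact q 0 = 1 := by simp [qFact]

lemma qFact_succ (q : k) (n : ℕ) : qFact q (n + 1) = qFact q n * qNat q (n + 1) := by
  simp [qFact, Finset.prod_range_succ]

lemma gb_mul_fact (q : k) : ∀ n m, m ≤ n →
    gb q n m * (qFact q (n - m) * qFact q m) = qFact q n := by
  intro n
  induction n with
  | zero => intro m hm; interval_cases m; simp
  | succ n ih =>
    intro m hm
    cases m with
    | zero => simp
    | succ t =>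
      rcases Nat.lt_or_ge t n with hlt | hge
      · obtain ⟨u, hu⟩ : ∃ u, n = t + 1 + u := ⟨n - (t + 1), by omega⟩
        have h1 := ih t (by omega)
        have h2 := ih (t + 1) (by omega)
        have hnt : n - t = u + 1 := by omega
        have hnt1 : n - (t + 1) = u := by omega
        have hsub : n + 1 - (t + 1) = u + 1 := by omega
        rw [hnt] at h1
        rw [hnt1] at h2
        have hadd : qNat q (n + 1) = qNat q (t + 1) + q ^ (t + 1) * qNat q (u + 1) := by
          rw [show n + 1 = (t + 1) + (u + 1) by omega, qNat_add]
        rw [gb_succ_succ, hsub, qFact_succ q n, hadd,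
          qFact_succ q u, qFact_succ q t]
        rw [qFact_succ q u] at h1
        rw [qFact_succ q t] at h2
        linear_combination qNat q (t + 1) * h1 + q ^ (t + 1) * qNat q (u + 1) * h2
      · have : t = n := by omega
        subst this
        simp [qFact_succ]

/-- q-Vandermonde identity for `gb`. -/
lemma vand (q : k) (hq0 : q ≠ 0) : ∀ m n r, r ≤ n →
    gb q (m + n) r
      = ∑ x ∈ Finset.range (r + 1), gb q m x * gb q n (r - x) * q ^ (x * (n - r + x)) := by
  intro m
  induction m with
  | zero =>
    intro n r _
    rw [Finset.sum_eq_single 0]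
    · simp
    · intro b _ hb
      cases b with
      | zero => exact absurd rfl hb
      | succ c => simp
    · intro h; exact absurd (Finset.mem_range.mpr (by omega)) h
  | succ m ih =>
    intro n r hr
    cases r with
    | zero => simp
    | succ s =>
      obtain ⟨d, rfl⟩ : ∃ d, n = s + 1 + d := ⟨n - (s + 1), by omega⟩
      apply mul_left_cancel₀ (pow_ne_zero (s + 1) hq0)
      rw [show m + 1 + (s + 1 + d) = (m + (s + 1 + d)) + 1 by ring, pascalB,
        ih (s + 1 + d) s (by omega), ih (s + 1 + d) (s + 1) (by omega)]
      simp only [show s + 1 + d - s = d + 1 from by omega,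
        show s + 1 + d - (s + 1) = d from by omega]
      rw [Finset.sum_range_succ'
          (fun x => gb q m x * gb q (s + 1 + d) (s + 1 - x) * q ^ (x * (d + x))) (s + 1),
        Finset.sum_range_succ'
          (fun x => gb q (m + 1) x * gb q (s + 1 + d) (s + 1 - x) * q ^ (x * (d + x))) (s + 1)]
      simp only [Nat.succ_sub_succ, gb_zero, one_mul, pow_zero, mul_one, Nat.sub_zero,
        Nat.mul_zero, Nat.zero_mul]
      rw [mul_add, mul_add, Finset.mul_sum, Finset.mul_sum, Finset.mul_sum,
        ← add_assoc, ← Finset.sum_add_distrib]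
      congr 1
      refine Finset.sum_congr rfl fun x _ => ?_
      linear_combination (-(q ^ (s + 1 + (x + 1) * (d + x))) * gb q (s + 1 + d) (s - x)) *
        pascalB q m x

end QAux

open QAux
theorem stmt_0 {k : Type*} [Field k] [CharZero k] (N : ℕ) (hN : 1 < N) (q : k)
    (hq : IsPrimitiveRoot q N) (a i j : ℕ) (ha : a < N) (hi : i < N) (hj : j < N)
    (hij : i + j = N + a) :
    ∑ m ∈ Finset.range (a + 1),
      q ^ ((m : ℤ) * ((m : ℤ) - (j : ℤ))) * qBinom q j m * qBinom q i (a - m) = 1 := by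
  have hq0 : q ≠ 0 := hq.ne_zero (by omega)
  have haj : a < j := by omega
  have hai : a < i := by omega
  -- nonvanishing of q-integers and q-factorials below N
  have hqNat : ∀ t, 0 < t → t < N → qNat q t ≠ 0 := by
    intro t ht htN h0
    have := geom_sum_mul q t
    rw [show (∑ i ∈ Finset.range t, q ^ i) = qNat q t from rfl, h0, zero_mul] at this
    exact hq.pow_ne_one_of_pos_of_lt ht.ne' htN (sub_eq_zero.mp this.symm)
  have hqFact : ∀ t, t < N → qFact q t ≠ 0 := by
    intro t htN
    induction t with
    | zero => simp
    | succ s ih =>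
      rw [qFact_succ]
      exact mul_ne_zero (ih (by omega)) (hqNat (s + 1) (by omega) htN)
  -- `qBinom` agrees with `gb` in the admissible range
  have hbinom : ∀ n m, m ≤ n → n < N → qBinom q n m = gb q n m := by
    intro n m hmn hnN
    have := gb_mul_fact q n m hmn
    rw [qBinom, ← this]
    rw [mul_div_assoc, div_self (mul_ne_zero (hqFact (n - m) (by omega)) (hqFact m (by omega))), mul_one]
  -- `qFact q N = 0`, hence `gb q N x = 0` for `0 < x < N`
  have hFactN : qFact q N = 0 := by
    obtain ⟨P, hP⟩ : ∃ P, N = P + 1 := ⟨N - 1, by omega⟩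
    rw [hP, qFact_succ, show qNat q (P + 1) = ∑ i ∈ Finset.range (P + 1), q ^ i from rfl,
      ← hP, hq.geom_sum_eq_zero hN, mul_zero]
  have hgbN : ∀ x, 0 < x → x < N → gb q N x = 0 := by
    intro x hx hxN
    have h := gb_mul_fact q N x (by omega)
    rw [hFactN] at h
    rcases mul_eq_zero.mp h with h' | h'
    · exact h'
    · rcases mul_eq_zero.mp h' with h'' | h''
      · exact absurd h'' (hqFact (N - x) (by omega))
      · exact absurd h'' (hqFact x (by omega))
  -- the sum equals the Vandermonde sum for gb
  have hsum : ∑ m ∈ Finset.range (a + 1),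
      q ^ ((m : ℤ) * ((m : ℤ) - (j : ℤ))) * qBinom q j m * qBinom q i (a - m)
      = ∑ x ∈ Finset.range (a + 1), gb q j x * gb q i (a - x) * q ^ (x * (i - a + x)) := by
    refine Finset.sum_congr rfl fun m hm => ?_
    have hma : m ≤ a := by
      have := Finset.mem_range.mp hm; omega
    rw [hbinom j m (by omega) hj, hbinom i (a - m) (by omega) hi]
    have hexp : q ^ ((m : ℤ) * ((m : ℤ) - (j : ℤ))) = q ^ (m * (i - a + m)) := by
      have hcast : ((m * (i - a + m) : ℕ) : ℤ)
          = (m : ℤ) * ((m : ℤ) - (j : ℤ)) + (m : ℤ) * (N : ℤ) := by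
        have : (i : ℤ) - (a : ℤ) = (N : ℤ) - (j : ℤ) := by
          have := congrArg (fun t : ℕ => (t : ℤ)) hij
          push_cast at this
          linarith
        push_cast [Nat.cast_sub (le_of_lt hai)]
        rw [this]
        ring
      rw [← zpow_natCast q (m * (i - a + m)), hcast, zpow_add₀ hq0]
      have : q ^ ((m : ℤ) * (N : ℤ)) = 1 := by
        rw [show (m : ℤ) * (N : ℤ) = ((m * N : ℕ) : ℤ) by push_cast; ring,
          zpow_natCast, pow_mul', hq.pow_eq_one, one_pow]
      rw [this, mul_one]
    rw [hexp]; ring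
  rw [hsum, ← vand q hq0 j i a (le_of_lt hai),
    show j + i = N + a by omega, vand q hq0 N a a le_rfl]
  rw [Finset.sum_eq_single 0]
  · simp
  · intro b hb hb0
    rw [hgbN b (by omega) (by have := Finset.mem_range.mp hb; omega), zero_mul, zero_mul]
  · intro h; exact absurd (Finset.mem_range.mpr (by omega)) h
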